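/- Let (U,0) ⊆ (X,0) be pointed CFG-spaces over a Boolean ring B (U with the restricted metric). Then the orthogonal complement U^⊥ = {x ∈ X : x ⊥ y for all y ∈ U} is a CFG-space, and every element of X is a convex combination of elements of U ∪ U^⊥. -/
import Mathlib


/-- The order on a Boolean ring: `a ≤ b` iff `a * b = a`. -/
def ble {B : Type} [BooleanRing B] (a b : B) : Prop := a * b = a

/-- The join on a Boolean ring: `a ∨ b = a + b + a * b`. -/
def bjoin {B : Type} [BooleanRing B] (a b : B) : B := a + b + a * b

/-- A Boolean metric space over a Boolean ring `B`: `d x y = 0` iff `x = y`,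
`d` is symmetric, and `d x z ≤ d x y ∨ d y z`. -/
structure BooleanMetric (B : Type) [BooleanRing B] (X : Type) where
  d : X → X → B
  d_eq_zero : ∀ x y, d x y = 0 ↔ x = y
  d_symm : ∀ x y, d x y = d y x
  d_tri : ∀ x y z, ble (d x z) (bjoin (d x y) (d y z))

/-- The coefficients `a i` have pairwise zero products. -/
def PairwiseOrthCoeffs {B : Type} [BooleanRing B] {k : ℕ} (a : Fin k → B) : Prop :=
  ∀ i j, i ≠ j → a i * a j = 0

/-- `x` is a convex combination of `x₁, …, xₖ` with coefficients `a₁, …, aₖ`,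
i.e. `aᵢ · d(x, xᵢ) = 0` for all `i`. -/
def IsConvComb {B X : Type} [BooleanRing B] (m : BooleanMetric B X) {k : ℕ}
    (a : Fin k → B) (xs : Fin k → X) (x : X) : Prop :=
  ∀ i, a i * m.d x (xs i) = 0

/-- A subset `S` is convex: every convex combination of points of `S` (with pairwise
disjoint coefficients summing to `1`) exists in `S`. -/
def IsConvexSubspace {B X : Type} [BooleanRing B] (m : BooleanMetric B X) (S : Set X) : Prop :=
  ∀ (k : ℕ) (a : Fin k → B) (xs : Fin k → X), (∀ i, xs i ∈ S) →
    PairwiseOrthCoeffs a → (∑ i, a i) = 1 → ∃ x ∈ S, IsConvComb m a xs x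

/-- A subset `S` is a CFG-space: it is convex and there are finitely many points of `S`
of which every point of `S` is a convex combination. -/
def IsCFGSubspace {B X : Type} [BooleanRing B] (m : BooleanMetric B X) (S : Set X) : Prop :=
  IsConvexSubspace m S ∧
  ∃ (k : ℕ) (xs : Fin k → X), (∀ i, xs i ∈ S) ∧
    ∀ x ∈ S, ∃ a : Fin k → B, PairwiseOrthCoeffs a ∧ (∑ i, a i) = 1 ∧ IsConvComb m a xs x

/-- A contractive map: `d(f x, f y) ≤ d(x, y)`. -/
def Contractive {B X Y : Type} [BooleanRing B] (mX : BooleanMetric B X) (mY : BooleanMetric B Y)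
    (f : X → Y) : Prop :=
  ∀ x y, ble (mY.d (f x) (f y)) (mX.d x y)

/-- `sm a x` is the convex combination `a x + (a+1) 0` of `x` and the base point `z`
with coefficients `a` and `a + 1`. -/
def IsScalarMul {B X : Type} [BooleanRing B] (m : BooleanMetric B X) (z : X)
    (sm : B → X → X) : Prop :=
  ∀ a x, a * m.d (sm a x) x = 0 ∧ (a + 1) * m.d (sm a x) z = 0

/-- `x ⊥ y`, i.e. `x ⋆ y = (d(x,y)+1) x = 0`. -/
def Orth {B X : Type} [BooleanRing B] (m : BooleanMetric B X) (z : X) (sm : B → X → X)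
    (x y : X) : Prop :=
  sm (m.d x y + 1) x = z

/-- `x` is the convex combination of `0, x₁, …, xₖ` with coefficients
`a₀ = 1 + a₁ + ⋯ + aₖ, a₁, …, aₖ`. -/
def ConvCombWithZero {B X : Type} [BooleanRing B] (m : BooleanMetric B X) (z : X) {k : ℕ}
    (a : Fin k → B) (xs : Fin k → X) (x : X) : Prop :=
  PairwiseOrthCoeffs a ∧ (∀ i, a i * m.d x (xs i) = 0) ∧ (1 + ∑ i, a i) * m.d x z = 0

/-- `x₁, …, xₖ` is a referential of `(X, z)`: the `xᵢ` are nonzero, pairwise orthogonal,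
and every point of `X` is a convex combination of `0, x₁, …, xₖ`. -/
def IsReferential {B X : Type} [BooleanRing B] (m : BooleanMetric B X) (z : X)
    (sm : B → X → X) {k : ℕ} (xs : Fin k → X) : Prop :=
  (∀ i, xs i ≠ z) ∧ (∀ i j, i ≠ j → Orth m z sm (xs i) (xs j)) ∧
  ∀ x : X, ∃ a : Fin k → B, ConvCombWithZero m z a xs x

/-- The whole space is a convex closure of the subset `S`: it is convex and every point
is a convex combination of points of `S`. -/
def IsConvexClosure {B X : Type} [BooleanRing B] (m : BooleanMetric B X) (S : Set X) : Prop :=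
  IsConvexSubspace m Set.univ ∧
  ∀ x : X, ∃ (k : ℕ) (a : Fin k → B) (xs : Fin k → X),
    (∀ i, xs i ∈ S) ∧ PairwiseOrthCoeffs a ∧ (∑ i, a i) = 1 ∧ IsConvComb m a xs x

/-- A finite set `R` is a referential of `(X, z)` (set version). -/
def IsReferentialSet {B X : Type} [BooleanRing B] (m : BooleanMetric B X) (z : X)
    (sm : B → X → X) (R : Finset X) : Prop :=
  z ∉ R ∧ (∀ x ∈ R, ∀ y ∈ R, x ≠ y → Orth m z sm x y) ∧
  ∀ u : X, ∃ a : X → B,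
    (∀ x ∈ R, ∀ y ∈ R, x ≠ y → a x * a y = 0) ∧
    (∀ x ∈ R, a x * m.d u x = 0) ∧ (1 + ∑ x ∈ R, a x) * m.d u z = 0

section Aux
variable {B X : Type} [BooleanRing B]

lemma bmul_self (a : B) : a * a = a := BooleanRing.mul_self a
lemma badd_self (a : B) : a + a = 0 := BooleanRing.add_self a

lemma bdisj (a : B) : a * (a + 1) = 0 := by
  rw [mul_add, bmul_self, mul_one, badd_self]

lemma split_eq (a b : B) : a * b + (a + 1) * b = b := by
  have h : a * b + (a + 1) * b = (a + a) * b + b := by ring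
  rw [h, badd_self, zero_mul, zero_add]

lemma ble_trans' {a b c : B} (h1 : ble a b) (h2 : ble b c) : ble a c := by
  unfold ble at *
  calc a * c = a * b * c := by rw [h1]
    _ = a * (b * c) := by ring
    _ = a * b := by rw [h2]
    _ = a := h1

lemma ble_mul_left' {a b : B} (c : B) (h : ble a b) : ble (c * a) (c * b) := by
  unfold ble at *
  calc c * a * (c * b) = c * c * (a * b) := by ring
    _ = c * a := by rw [bmul_self, h]

lemma ble_mul_self_right {a b : B} : ble (a * b) b := by
  unfold ble
  calc a * b * b = a * (b * b) := by ring
    _ = a * b := by rw [bmul_self]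

lemma ble_mul_self_left {a b : B} : ble (a * b) a := by
  unfold ble
  calc a * b * a = a * a * b := by ring
    _ = a * b := by rw [bmul_self]

lemma eq_zero_of_ble_zero {a : B} (h : ble a 0) : a = 0 := by
  unfold ble at h; rw [mul_zero] at h; exact h.symm

lemma ble_iff_eq_zero (a b : B) : ble a b ↔ (b + 1) * a = 0 := by
  constructor
  · intro h
    unfold ble at h
    calc (b + 1) * a = a * b + a := by ring
      _ = a + a := by rw [h]
      _ = 0 := badd_self a
  · intro h
    unfold ble
    have h2 : a * b + a = 0 := by
      calc a * b + a = (b + 1) * a := by ring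
        _ = 0 := h
    calc a * b = a * b + 0 := by rw [add_zero]
      _ = a * b + (a * b + a) := by rw [h2]
      _ = (a * b + a * b) + a := by ring
      _ = a := by rw [badd_self, zero_add]

variable (m : BooleanMetric B X)

lemma key (x y w : X) (c : B) (h : c * m.d x y = 0) :
    ble (c * m.d x w) (c * m.d y w) := by
  have t := m.d_tri x y w
  unfold ble bjoin at t
  have h2 : c * m.d x w = c * (m.d x w * m.d y w) := by
    calc c * m.d x w
        = c * (m.d x w * (m.d x y + m.d y w + m.d x y * m.d y w)) := by rw [t]
      _ = (c * m.d x y) * m.d x w + c * (m.d x w * m.d y w)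
            + (c * m.d x y) * (m.d x w * m.d y w) := by ring
      _ = c * (m.d x w * m.d y w) := by rw [h]; ring
  unfold ble
  calc c * m.d x w * (c * m.d y w) = c * c * (m.d x w * m.d y w) := by ring
    _ = c * (m.d x w * m.d y w) := by rw [bmul_self]
    _ = c * m.d x w := h2.symm

lemma dzero (x : X) : m.d x x = 0 := (m.d_eq_zero x x).mpr rfl

end Aux

section Mid
variable {B X : Type} [BooleanRing B] (m : BooleanMetric B X)

lemma orth_iff (z : X) (sm : B → X → X) (hsm : IsScalarMul m z sm) (x y : X) :
    Orth m z sm x y ↔ ble (m.d x z) (m.d x y) := by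
  rw [ble_iff_eq_zero]
  constructor
  · intro h
    have h1 := (hsm (m.d x y + 1) x).1
    rw [h] at h1
    rw [m.d_symm x z]
    exact h1
  · intro h
    unfold Orth
    have h1 := (hsm (m.d x y + 1) x).1
    have h2 := (hsm (m.d x y + 1) x).2
    have h3 : ble ((m.d x y + 1) * m.d (sm (m.d x y + 1) x) z)
        ((m.d x y + 1) * m.d x z) := key m (sm (m.d x y + 1) x) x z (m.d x y + 1) h1
    rw [h] at h3
    have h5 : (m.d x y + 1) * m.d (sm (m.d x y + 1) x) z = 0 := eq_zero_of_ble_zero h3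
    have h6 : m.d (sm (m.d x y + 1) x) z = 0 := by
      have h7 := split_eq (m.d x y + 1) (m.d (sm (m.d x y + 1) x) z)
      rw [h5, h2, zero_add] at h7
      exact h7.symm
    exact (m.d_eq_zero _ _).mp h6

lemma pairmin {U : Set X} (hU : IsConvexSubspace m U) (x p1 p2 : X)
    (h1 : p1 ∈ U) (h2 : p2 ∈ U) :
    ∃ p ∈ U, ble (m.d x p) (m.d x p1) ∧ ble (m.d x p) (m.d x p2) := by
  set c := m.d x p2 with hc
  have hmem : ∀ i, (![p1, p2] : Fin 2 → X) i ∈ U := by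
    intro i; fin_cases i
    · exact h1
    · exact h2
  have hdis : PairwiseOrthCoeffs (![c, c+1] : Fin 2 → B) := by
    intro i j hij
    fin_cases i <;> fin_cases j <;> simp_all
    · exact bdisj c
    · rw [mul_comm]; exact bdisj c
  have hsum : (∑ i, (![c, c+1] : Fin 2 → B) i) = 1 := by
    rw [Fin.sum_univ_two]
    show c + (c + 1) = 1
    rw [← add_assoc, badd_self, zero_add]
  obtain ⟨p, hpU, hcomb⟩ := hU 2 ![c, c+1] ![p1, p2] hmem hdis hsum
  have hc0 : c * m.d p p1 = 0 := by have := hcomb 0; simpa using this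
  have hc1 : (c + 1) * m.d p p2 = 0 := by have := hcomb 1; simpa using this
  have e1 : (c + 1) * m.d p x = 0 := by
    have hk := key m p p2 x (c + 1) hc1
    have hr : (c + 1) * m.d p2 x = 0 := by
      rw [m.d_symm p2 x, ← hc, mul_comm]
      exact bdisj c
    rw [hr] at hk
    exact eq_zero_of_ble_zero hk
  have e2 : c * m.d p x = m.d p x := by
    have h := split_eq c (m.d p x)
    rw [e1, add_zero] at h
    exact h
  have k1 : ble (c * m.d p x) (c * m.d p1 x) := key m p p1 x c hc0
  refine ⟨p, hpU, ?_, ?_⟩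
  · rw [m.d_symm x p, m.d_symm x p1, ← e2]
    exact ble_trans' k1 ble_mul_self_right
  · rw [m.d_symm x p, ← e2]
    exact ble_trans' k1 ble_mul_self_left

lemma proj (z : X) {U : Set X} (hU : IsConvexSubspace m U) (hz : z ∈ U) (x : X) :
    ∀ (n : ℕ) (u : Fin n → X), (∀ i, u i ∈ U) →
      ∃ p ∈ U, ∀ i, ble (m.d x p) (m.d x (u i)) := by
  intro n
  induction n with
  | zero => exact fun u _ => ⟨z, hz, fun i => i.elim0⟩
  | succ n ih =>
    intro u hu
    obtain ⟨p0, hp0, hb0⟩ := ih (fun i => u i.castSucc) (fun i => hu _)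
    obtain ⟨p, hp, hb1, hb2⟩ := pairmin m hU x p0 (u (Fin.last n)) hp0 (hu _)
    refine ⟨p, hp, fun i => ?_⟩
    induction i using Fin.lastCases with
    | last => exact hb2
    | cast i => exact ble_trans' hb1 (hb0 i)

lemma minU (z : X) {U : Set X} (hz : z ∈ U) (hU : IsCFGSubspace m U) (x : X) :
    ∃ p ∈ U, ∀ y ∈ U, ble (m.d x p) (m.d x y) := by
  obtain ⟨hconv, n, u, huU, hgen⟩ := hU
  obtain ⟨p, hpU, hb⟩ := proj m z hconv hz x n u huU
  refine ⟨p, hpU, fun y hy => ?_⟩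
  obtain ⟨a, hdis, hsum, hcc⟩ := hgen y hy
  set e := m.d x p with he
  have step : ∀ i, a i * (e * m.d x y) = a i * e := by
    intro i
    have t1 : ble (a i * e) (a i * m.d x (u i)) := ble_mul_left' _ (hb i)
    have t2 : ble (a i * m.d (u i) x) (a i * m.d y x) :=
      key m (u i) y x (a i) (by rw [m.d_symm]; exact hcc i)
    rw [m.d_symm (u i) x, m.d_symm y x] at t2
    have t3 : ble (a i * e) (a i * m.d x y) := ble_trans' t1 t2
    unfold ble at t3
    calc a i * (e * m.d x y) = a i * e * (a i * m.d x y) := by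
          rw [show a i * e * (a i * m.d x y) = a i * a i * (e * m.d x y) from by ring,
            bmul_self]
      _ = a i * e := t3
  unfold ble
  calc e * m.d x y = 1 * (e * m.d x y) := (one_mul _).symm
    _ = (∑ i, a i) * (e * m.d x y) := by rw [hsum]
    _ = ∑ i, a i * (e * m.d x y) := Finset.sum_mul _ _ _
    _ = ∑ i, a i * e := Finset.sum_congr rfl (fun i _ => step i)
    _ = (∑ i, a i) * e := (Finset.sum_mul _ _ _).symm
    _ = e := by rw [hsum, one_mul]

lemma decomp (z : X) (sm : B → X → X) (hsm : IsScalarMul m z sm) {U : Set X}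
    (hz : z ∈ U) (hU : IsCFGSubspace m U) (x : X) :
    ∃ p q e, p ∈ U ∧ (∀ y ∈ U, Orth m z sm q y) ∧
      (e + 1) * m.d x p = 0 ∧ e * m.d x q = 0 := by
  obtain ⟨p, hpU, hmin⟩ := minU m z hz hU x
  refine ⟨p, sm (m.d x p) x, m.d x p, hpU, ?_, ?_, ?_⟩
  · set e := m.d x p with he
    set q := sm e x with hq
    have hq1 : e * m.d q x = 0 := (hsm e x).1
    have hq2 : (e + 1) * m.d q z = 0 := (hsm e x).2
    intro y hy
    rw [orth_iff m z sm hsm]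
    have k1 : ble (e * m.d x y) (e * m.d q y) :=
      key m x q y e (by rw [m.d_symm]; exact hq1)
    have hxy : e * m.d x y = e := hmin y hy
    rw [hxy] at k1
    unfold ble at k1
    have k2 : e * m.d q y = e := by
      calc e * m.d q y = e * e * m.d q y := by rw [bmul_self]
        _ = e * (e * m.d q y) := by ring
        _ = e := k1
    have k3 : e * m.d q z = m.d q z := by
      have h := split_eq e (m.d q z)
      rw [hq2, add_zero] at h
      exact h
    unfold ble
    rw [← k3]
    calc e * m.d q z * m.d q y = e * m.d q y * m.d q z := by ring
      _ = e * m.d q z := by rw [k2]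
  · calc (m.d x p + 1) * m.d x p = m.d x p * (m.d x p + 1) := by ring
      _ = 0 := bdisj _
  · rw [m.d_symm x (sm (m.d x p) x)]
    exact (hsm (m.d x p) x).1

end Mid

/-- For pointed CFG-spaces `(U, z) ⊆ (X, z)`, the orthogonal complement
`U^⊥ = {x : x ⊥ y for all y ∈ U}` is a CFG-space, and every point of `X` is a convex
combination of points of `U ∪ U^⊥`. -/
theorem stmt11 {B X : Type} [BooleanRing B] (m : BooleanMetric B X)
    (z : X) (sm : B → X → X) (hsm : IsScalarMul m z sm)
    (U : Set X) (hz : z ∈ U)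
    (hU : IsCFGSubspace m U) (hX : IsCFGSubspace m Set.univ) :
    IsCFGSubspace m {x : X | ∀ y ∈ U, Orth m z sm x y} ∧
    ∀ u : X, ∃ (k : ℕ) (a : Fin k → B) (xs : Fin k → X),
      (∀ i, xs i ∈ U ∪ {x : X | ∀ y ∈ U, Orth m z sm x y}) ∧
      PairwiseOrthCoeffs a ∧ (∑ i, a i) = 1 ∧ IsConvComb m a xs u := by
  have hzUp : z ∈ {x : X | ∀ y ∈ U, Orth m z sm x y} := by
    intro y hy
    rw [orth_iff m z sm hsm]
    unfold ble
    rw [dzero m z, zero_mul]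
  -- convexity of Uperp
  have hUpconv : IsConvexSubspace m {x : X | ∀ y ∈ U, Orth m z sm x y} := by
    intro k a qs hqs hdis hsum
    obtain ⟨x, -, hcc⟩ := hX.1 k a qs (fun i => trivial) hdis hsum
    refine ⟨x, ?_, hcc⟩
    intro y hy
    rw [orth_iff m z sm hsm]
    have step : ∀ i, a i * m.d x z * m.d x y = a i * m.d x z := by
      intro i
      have t1 : ble (a i * m.d x z) (a i * m.d (qs i) z) :=
        key m x (qs i) z (a i) (hcc i)
      have horth : ble (m.d (qs i) z) (m.d (qs i) y) :=
        (orth_iff m z sm hsm _ _).mp (hqs i y hy)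
      have t2 : ble (a i * m.d (qs i) z) (a i * m.d (qs i) y) := ble_mul_left' _ horth
      have t3 : ble (a i * m.d (qs i) y) (a i * m.d x y) :=
        key m (qs i) x y (a i) (by rw [m.d_symm]; exact hcc i)
      have t4 := ble_trans' (ble_trans' t1 t2) t3
      unfold ble at t4
      calc a i * m.d x z * m.d x y
          = a i * m.d x z * (a i * m.d x y) := by
            rw [show a i * m.d x z * (a i * m.d x y)
                = a i * a i * (m.d x z * m.d x y) from by ring, bmul_self]
            ring
        _ = a i * m.d x z := t4
    unfold ble
    calc m.d x z * m.d x y = 1 * m.d x z * m.d x y := by rw [one_mul]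
      _ = (∑ i, a i) * m.d x z * m.d x y := by rw [hsum]
      _ = (∑ i, a i * m.d x z) * m.d x y := by rw [Finset.sum_mul]
      _ = ∑ i, a i * m.d x z * m.d x y := Finset.sum_mul _ _ _
      _ = ∑ i, a i * m.d x z := Finset.sum_congr rfl (fun i _ => step i)
      _ = (∑ i, a i) * m.d x z := (Finset.sum_mul _ _ _).symm
      _ = m.d x z := by rw [hsum, one_mul]
  -- generators of X and their decompositions
  obtain ⟨hXconv, n, xsX, -, hXgen⟩ := hX
  have hdec : ∀ j : Fin n, ∃ p q e, p ∈ U ∧ (∀ y ∈ U, Orth m z sm q y) ∧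
      (e + 1) * m.d (xsX j) p = 0 ∧ e * m.d (xsX j) q = 0 :=
    fun j => decomp m z sm hsm hz hU (xsX j)
  choose pp qq ee hppU hqqUp hpe hqe using hdec
  constructor
  · refine ⟨hUpconv, n + 1, Fin.cons z qq, ?_, ?_⟩
    · intro i
      induction i using Fin.cases with
      | zero => rw [Fin.cons_zero]; exact hzUp
      | succ j => rw [Fin.cons_succ]; exact hqqUp j
    · intro q' hq'
      obtain ⟨c, hcdis, hcsum, hccc⟩ := hXgen q' trivial
      have hbs : ∀ (i j : Fin n), i ≠ j → (c i * ee i) * (c j * ee j) = 0 := by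
        intro i j hij
        calc (c i * ee i) * (c j * ee j) = (c i * c j) * (ee i * ee j) := by ring
          _ = 0 := by rw [hcdis i j hij, zero_mul]
      have hb0 : ∀ j : Fin n, (1 + ∑ i, c i * ee i) * (c j * ee j) = 0 := by
        intro j
        have hsum' : (∑ i, c i * ee i) * (c j * ee j) = c j * ee j := by
          rw [Finset.sum_mul]
          rw [Finset.sum_eq_single j]
          · calc (c j * ee j) * (c j * ee j) = (c j * c j) * (ee j * ee j) := by ring
              _ = c j * ee j := by rw [bmul_self, bmul_self]
          · intro i _ hij; exact hbs i j hij
          · intro h; exact absurd (Finset.mem_univ j) h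
        calc (1 + ∑ i, c i * ee i) * (c j * ee j)
            = c j * ee j + (∑ i, c i * ee i) * (c j * ee j) := by ring
          _ = c j * ee j + c j * ee j := by rw [hsum']
          _ = 0 := badd_self _
      refine ⟨Fin.cons (1 + ∑ j, c j * ee j) (fun j => c j * ee j), ?_, ?_, ?_⟩
      · intro i j hij
        induction i using Fin.cases with
        | zero =>
          induction j using Fin.cases with
          | zero => exact absurd rfl hij
          | succ j =>
            rw [Fin.cons_zero, Fin.cons_succ]
            exact hb0 j
        | succ i =>
          induction j using Fin.cases with
          | zero =>
            rw [Fin.cons_succ, Fin.cons_zero, mul_comm]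
            exact hb0 i
          | succ j =>
            rw [Fin.cons_succ, Fin.cons_succ]
            exact hbs i j (fun h => hij (by rw [h]))
      · rw [Fin.sum_cons]
        calc (1 + ∑ j, c j * ee j) + ∑ j, c j * ee j
            = 1 + ((∑ j, c j * ee j) + ∑ j, c j * ee j) := by ring
          _ = 1 := by rw [badd_self, add_zero]
      · intro i
        induction i using Fin.cases with
        | zero =>
          rw [Fin.cons_zero, Fin.cons_zero]
          have term0 : ∀ j, (c j * (ee j + 1)) * m.d q' z = 0 := by
            intro j
            have s1 : ble (c j * m.d q' (pp j)) (c j * m.d (xsX j) (pp j)) :=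
              key m q' (xsX j) (pp j) (c j) (hccc j)
            have s2 := ble_mul_left' (ee j + 1) s1
            have s3 : (ee j + 1) * (c j * m.d (xsX j) (pp j)) = 0 := by
              calc (ee j + 1) * (c j * m.d (xsX j) (pp j))
                  = c j * ((ee j + 1) * m.d (xsX j) (pp j)) := by ring
                _ = 0 := by rw [hpe j, mul_zero]
            rw [s3] at s2
            have s4 : (ee j + 1) * (c j * m.d q' (pp j)) = 0 := eq_zero_of_ble_zero s2
            have s5 : ble (m.d q' z) (m.d q' (pp j)) :=
              (orth_iff m z sm hsm _ _).mp (hq' (pp j) (hppU j))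
            unfold ble at s5
            calc (c j * (ee j + 1)) * m.d q' z
                = (c j * (ee j + 1)) * (m.d q' z * m.d q' (pp j)) := by rw [s5]
              _ = ((ee j + 1) * (c j * m.d q' (pp j))) * m.d q' z := by ring
              _ = 0 := by rw [s4, zero_mul]
          have expand : ∑ j, (c j * (ee j + 1)) * m.d q' z
              = (1 + ∑ j, c j * ee j) * m.d q' z := by
            rw [Finset.sum_congr rfl (fun j (_ : j ∈ Finset.univ) =>
              show (c j * (ee j + 1)) * m.d q' z
                  = (c j * ee j) * m.d q' z + c j * m.d q' z from by ring)]
            rw [Finset.sum_add_distrib, ← Finset.sum_mul, ← Finset.sum_mul, hcsum, one_mul]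
            ring
          rw [← expand]
          exact Finset.sum_eq_zero (fun j _ => term0 j)
        | succ j =>
          rw [Fin.cons_succ, Fin.cons_succ]
          have s1 : ble (c j * m.d q' (qq j)) (c j * m.d (xsX j) (qq j)) :=
            key m q' (xsX j) (qq j) (c j) (hccc j)
          have s2 := ble_mul_left' (ee j) s1
          have s3 : ee j * (c j * m.d (xsX j) (qq j)) = 0 := by
            calc ee j * (c j * m.d (xsX j) (qq j))
                = c j * (ee j * m.d (xsX j) (qq j)) := by ring
              _ = 0 := by rw [hqe j, mul_zero]
          rw [s3] at s2
          have s4 : ee j * (c j * m.d q' (qq j)) = 0 := eq_zero_of_ble_zero s2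
          calc (c j * ee j) * m.d q' (qq j) = ee j * (c j * m.d q' (qq j)) := by ring
            _ = 0 := s4
  · intro u
    obtain ⟨p, q, e, hpU, hqUp, h1, h2⟩ := decomp m z sm hsm hz hU u
    refine ⟨2, ![e + 1, e], ![p, q], ?_, ?_, ?_, ?_⟩
    · intro i; fin_cases i
      · exact Or.inl hpU
      · exact Or.inr hqUp
    · intro i j hij
      fin_cases i <;> fin_cases j <;> simp_all
      · rw [mul_comm]; exact bdisj e
      · exact bdisj e
    · rw [Fin.sum_univ_two]
      show (e + 1) + e = 1
      calc (e + 1) + e = 1 + (e + e) := by ring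
        _ = 1 := by rw [badd_self, add_zero]
    · intro i; fin_cases i
      · exact h1
      · exact h2
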